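/- Let N ≥ 3, 1 < p < 2N/(N + 2) and T ∈ ℝ. There exists a constant κ > 0, depending only on N and p, such that the function v(x, t) := κ·(T − t)^{1/(2−p)}·‖x‖^{p/(p−2)} satisfies the parabolic p-Laplace equation ∂_t v(x, t) = div_x(‖∇_x v(x,t)‖^{p−2}·∇_x v(x,t)) pointwise at every (x, t) ∈ ℝ^N × ℝ with x ≠ 0 and t < T. -/

import Mathlib

/-- The divergence of a vector field `F : ℝ^N → ℝ^N` at `x`: the trace of its Jacobian. -/
noncomputable def divergence {N : ℕ}
    (F : EuclideanSpace ℝ (Fin N) → EuclideanSpace ℝ (Fin N))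
    (x : EuclideanSpace ℝ (Fin N)) : ℝ :=
  ∑ i, fderiv ℝ F x (EuclideanSpace.single i 1) i

/-- The `p`-Laplacian flux `‖∇f‖^{p-2} ∇f` of a scalar function `f : ℝ^N → ℝ`. -/
noncomputable def pFlux {N : ℕ} (p : ℝ) (f : EuclideanSpace ℝ (Fin N) → ℝ)
    (y : EuclideanSpace ℝ (Fin N)) : EuclideanSpace ℝ (Fin N) :=
  ‖gradient f y‖ ^ (p - 2) • gradient f y

open Real InnerProductSpace

section Aux

variable {E : Type*} [NormedAddCommGroup E] [InnerProductSpace ℝ E]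

/-- Derivative of `‖z‖^q` at a nonzero point. -/
lemma myHasFDerivAt_norm_rpow (x : E) (hx : x ≠ 0) (q : ℝ) :
    HasFDerivAt (fun z : E => ‖z‖ ^ q) ((q * ‖x‖ ^ (q - 2)) • (innerSL ℝ x : E →L[ℝ] ℝ)) x := by
  have hnx : (0:ℝ) < ‖x‖ := norm_pos_iff.mpr hx
  have h1 : HasFDerivAt (fun z : E => (inner ℝ z z : ℝ))
      ((fderivInnerCLM ℝ (x, x)).comp ((ContinuousLinearMap.id ℝ E).prod
        (ContinuousLinearMap.id ℝ E))) x :=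
    (hasFDerivAt_id x).inner ℝ (hasFDerivAt_id x)
  have hinner : (inner ℝ x x : ℝ) = ‖x‖ ^ (2:ℕ) := real_inner_self_eq_norm_sq x
  have hne : (inner ℝ x x : ℝ) ≠ 0 := by
    rw [hinner]; positivity
  have h2 : HasDerivAt (fun s : ℝ => s ^ (q / 2))
      ((q/2) * (inner ℝ x x : ℝ) ^ (q/2 - 1)) (inner ℝ x x : ℝ) :=
    Real.hasDerivAt_rpow_const (Or.inl hne)
  have h3 := h2.comp_hasFDerivAt (f := fun z : E => (inner ℝ z z : ℝ)) x h1
  have heq : (fun z : E => ‖z‖ ^ q) = fun z : E => (inner ℝ z z : ℝ) ^ (q / 2) := by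
    funext z
    rw [real_inner_self_eq_norm_sq z, ← Real.rpow_natCast (‖z‖) 2,
      ← Real.rpow_mul (norm_nonneg z)]
    norm_num
    rw [show (2:ℝ)*(q/2)=q from by ring]
  rw [heq]
  refine h3.congr_fderiv (Eq.symm ?_)
  ext y
  simp only [ContinuousLinearMap.coe_smul', Pi.smul_apply, innerSL_apply_apply,
    ContinuousLinearMap.coe_comp', Function.comp_apply, ContinuousLinearMap.prod_apply,
    ContinuousLinearMap.coe_id', id_eq, fderivInnerCLM_apply, smul_eq_mul]
  rw [real_inner_comm y x, hinner, ← Real.rpow_natCast (‖x‖) 2,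
    ← Real.rpow_mul (norm_nonneg x)]
  have h4 : ((2:ℕ):ℝ) * (q/2-1) = q - 2 := by push_cast; ring
  rw [h4]
  ring

variable [CompleteSpace E]

lemma myHasGradientAt (c q : ℝ) (y : E) (hy : y ≠ 0) :
    HasGradientAt (fun z : E => c * ‖z‖ ^ q) ((c * (q * ‖y‖ ^ (q - 2))) • y) y := by
  have h := (myHasFDerivAt_norm_rpow y hy q).const_mul c
  have heq : (toDual ℝ E) ((c * (q * ‖y‖ ^ (q - 2))) • y)
      = c • ((q * ‖y‖ ^ (q - 2)) • (innerSL ℝ y : E →L[ℝ] ℝ)) := by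
    ext z
    simp [InnerProductSpace.toDual_apply_apply, real_inner_smul_left]
    ring
  rw [hasGradientAt_iff_hasFDerivAt, heq]; exact h

lemma myGradient_eq (c q : ℝ) (y : E) (hy : y ≠ 0) :
    gradient (fun z : E => c * ‖z‖ ^ q) y = (c * (q * ‖y‖ ^ (q - 2))) • y :=
  (myHasGradientAt c q y hy).gradient

end Aux

lemma myPFlux_eq {N : ℕ} (p c α : ℝ)
    (hexp : (α - 2) * (p - 2) + (p - 2) + (α - 2) = α)
    (y : EuclideanSpace ℝ (Fin N)) (hy : y ≠ 0) :
    pFlux p (fun z : EuclideanSpace ℝ (Fin N) => c * ‖z‖ ^ α) y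
      = (|c * α| ^ (p - 2) * (c * α)) • (‖y‖ ^ α • y) := by
  have ht : (0:ℝ) < ‖y‖ := norm_pos_iff.mpr hy
  rw [pFlux, myGradient_eq c α y hy]
  have h1 : ‖(c * (α * ‖y‖ ^ (α - 2))) • y‖ = (|c * α| * ‖y‖ ^ (α - 2)) * ‖y‖ := by
    rw [norm_smul, Real.norm_eq_abs, abs_mul, abs_mul,
      abs_of_pos (Real.rpow_pos_of_pos ht _), abs_mul]
    ring
  rw [h1, smul_smul, smul_smul]
  congr 1
  rw [Real.mul_rpow (by positivity) ht.le,
    Real.mul_rpow (abs_nonneg _) (by positivity), ← Real.rpow_mul ht.le]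
  have h2 : ‖y‖ ^ ((α - 2) * (p - 2)) * ‖y‖ ^ (p - 2) * ‖y‖ ^ (α - 2) = ‖y‖ ^ α := by
    rw [← Real.rpow_add ht, ← Real.rpow_add ht, hexp]
  linear_combination (|c * α| ^ (p - 2) * c * α) * h2

lemma myDivergence_eq {N : ℕ} (p c α : ℝ)
    (hexp : (α - 2) * (p - 2) + (p - 2) + (α - 2) = α)
    (x : EuclideanSpace ℝ (Fin N)) (hx : x ≠ 0) :
    divergence (pFlux p (fun z : EuclideanSpace ℝ (Fin N) => c * ‖z‖ ^ α)) x
      = (|c * α| ^ (p - 2) * (c * α)) * (((N : ℝ) + α) * ‖x‖ ^ α) := by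
  have ht : (0:ℝ) < ‖x‖ := norm_pos_iff.mpr hx
  set D : ℝ := |c * α| ^ (p - 2) * (c * α) with hD
  have hG : HasFDerivAt (fun y : EuclideanSpace ℝ (Fin N) => D • (‖y‖ ^ α • y))
      (D • (‖x‖ ^ α • ContinuousLinearMap.id ℝ (EuclideanSpace ℝ (Fin N))
        + ((α * ‖x‖ ^ (α - 2)) • (innerSL ℝ x : EuclideanSpace ℝ (Fin N) →L[ℝ] ℝ)).smulRight x)) x :=
    ((myHasFDerivAt_norm_rpow x hx α).smul (hasFDerivAt_id x)).const_smul D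
  have hFG : pFlux p (fun z : EuclideanSpace ℝ (Fin N) => c * ‖z‖ ^ α)
      =ᶠ[nhds x] fun y : EuclideanSpace ℝ (Fin N) => D • (‖y‖ ^ α • y) := by
    filter_upwards [eventually_ne_nhds hx] with y hy
    exact myPFlux_eq p c α hexp y hy
  have hfd : fderiv ℝ (pFlux p (fun z : EuclideanSpace ℝ (Fin N) => c * ‖z‖ ^ α)) x
      = D • (‖x‖ ^ α • ContinuousLinearMap.id ℝ (EuclideanSpace ℝ (Fin N))
        + ((α * ‖x‖ ^ (α - 2)) • (innerSL ℝ x : EuclideanSpace ℝ (Fin N) →L[ℝ] ℝ)).smulRight x) := by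
    rw [hFG.fderiv_eq, hG.fderiv]
  rw [divergence]
  simp only [hfd, ContinuousLinearMap.smul_apply, ContinuousLinearMap.add_apply,
    ContinuousLinearMap.coe_smul', Pi.smul_apply, ContinuousLinearMap.coe_id', id_eq,
    ContinuousLinearMap.smulRight_apply, innerSL_apply_apply, PiLp.smul_apply, PiLp.add_apply,
    smul_eq_mul, EuclideanSpace.single_apply]
  have hinner : ∀ i, (inner ℝ x (EuclideanSpace.single i (1:ℝ)) : ℝ) = x i := by
    intro i
    rw [EuclideanSpace.inner_single_right]
    simp
  have hsum : ∑ i, x i * x i = ‖x‖ ^ (2:ℕ) := by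
    rw [← real_inner_self_eq_norm_sq x, PiLp.inner_apply]
    simp [RCLike.inner_apply, pow_two]
  have hterm : ∀ i : Fin N,
      D * ((‖x‖ ^ α * if True then 1 else 0)
        + α * ‖x‖ ^ (α - 2) * (inner ℝ x (EuclideanSpace.single i (1:ℝ)) : ℝ) * x i)
      = D * ‖x‖ ^ α + (D * α * ‖x‖ ^ (α - 2)) * (x i * x i) := by
    intro i
    rw [hinner i]
    simp only [if_true]
    ring
  rw [Finset.sum_congr rfl (fun i _ => hterm i), Finset.sum_add_distrib,
    Finset.sum_const, ← Finset.mul_sum, hsum, Finset.card_univ, Fintype.card_fin,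
    nsmul_eq_mul]
  have hpow : ‖x‖ ^ (α - 2) * ‖x‖ ^ (2:ℕ) = ‖x‖ ^ α := by
    rw [← Real.rpow_natCast ‖x‖ 2, ← Real.rpow_add ht]
    norm_num
  linear_combination (D * α) * hpow

/-- For `N ≥ 3` and `1 < p < 2N/(N+2)` there is `κ > 0` depending only on `N` and `p`
such that `v(x,t) = κ (T-t)^{1/(2-p)} ‖x‖^{p/(p-2)}` solves the parabolic `p`-Laplace
equation pointwise for `x ≠ 0` and `t < T` (an unbounded solution in the subcritical
singular range). -/
theorem unbounded_solution_subcritical (N : ℕ) (hN : 3 ≤ N) (p : ℝ)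
    (hp₁ : 1 < p) (hp₂ : p < 2 * (N : ℝ) / ((N : ℝ) + 2)) :
    ∃ κ : ℝ, 0 < κ ∧
      ∀ T : ℝ, ∀ (x : EuclideanSpace ℝ (Fin N)) (t : ℝ), x ≠ 0 → t < T →
        deriv (fun s : ℝ => κ * (T - s) ^ ((1 : ℝ) / (2 - p)) * ‖x‖ ^ (p / (p - 2))) t =
          divergence
            (pFlux p (fun z : EuclideanSpace ℝ (Fin N) =>
              κ * (T - t) ^ ((1 : ℝ) / (2 - p)) * ‖z‖ ^ (p / (p - 2)))) x := by
  have hN3 : (3:ℝ) ≤ (N:ℝ) := by exact_mod_cast hN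
  have hp0 : 0 < p := by linarith
  have hNpos : (0:ℝ) < (N:ℝ) := by linarith
  have hpN : p * ((N:ℝ) + 2) < 2 * N := by
    rw [← lt_div_iff₀ (by linarith : (0:ℝ) < (N:ℝ) + 2)]
    exact hp₂
  have hp2 : p < 2 := by nlinarith
  have h2p : (0:ℝ) < 2 - p := by linarith
  have hp2' : p - 2 ≠ 0 := by linarith
  obtain ⟨m, hmdef⟩ : ∃ m : ℝ, m = p / (2 - p) := ⟨_, rfl⟩
  have hm : 0 < m := hmdef ▸ div_pos hp0 h2p
  have hmN : m < (N:ℝ) := by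
    rw [hmdef, div_lt_iff₀ h2p]
    nlinarith
  have hαm : p / (p - 2) = -m := by
    rw [hmdef]
    field_simp
    ring
  have hαneg : p / (p - 2) < 0 := by rw [hαm]; linarith
  have hexp : (p/(p-2) - 2) * (p - 2) + (p - 2) + (p/(p-2) - 2) = p/(p-2) := by
    field_simp
    ring
  have hA : (0:ℝ) < (2 - p) * m ^ (p - 1) * ((N:ℝ) - m) := by
    have := Real.rpow_pos_of_pos hm (p - 1)
    have : (0:ℝ) < (N:ℝ) - m := by linarith
    positivity
  obtain ⟨κ, hκdef⟩ : ∃ κ : ℝ, κ = ((2 - p) * m ^ (p - 1) * ((N:ℝ) - m)) ^ ((1:ℝ) / (2 - p)) :=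
    ⟨_, rfl⟩
  have hκ : 0 < κ := hκdef ▸ Real.rpow_pos_of_pos hA _
  have hκA : κ ^ (2 - p) = (2 - p) * m ^ (p - 1) * ((N:ℝ) - m) := by
    rw [hκdef, ← Real.rpow_mul hA.le]
    rw [show (1:ℝ) / (2 - p) * (2 - p) = 1 from by field_simp]
    exact Real.rpow_one _
  have hκ2 : κ ^ (p - 1) * ((2 - p) * m ^ (p - 1) * ((N:ℝ) - m)) = κ := by
    rw [← hκA, ← Real.rpow_add hκ]
    norm_num
  have hkey : κ * ((1:ℝ) / (2 - p)) = κ ^ (p - 1) * (m ^ (p - 1) * ((N:ℝ) - m)) := by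
    calc κ * ((1:ℝ) / (2 - p))
        = (κ ^ (p - 1) * ((2 - p) * m ^ (p - 1) * ((N:ℝ) - m))) * ((1:ℝ) / (2 - p)) := by
          rw [hκ2]
      _ = κ ^ (p - 1) * (m ^ (p - 1) * ((N:ℝ) - m)) * ((2 - p) * ((1:ℝ) / (2 - p))) := by ring
      _ = κ ^ (p - 1) * (m ^ (p - 1) * ((N:ℝ) - m)) := by
          rw [mul_one_div_cancel h2p.ne', mul_one]
  refine ⟨κ, hκ, ?_⟩
  intro T x t hx htT
  have hT : 0 < T - t := by linarith
  have hKpos : 0 < (T - t) ^ ((1:ℝ) / (2 - p)) := Real.rpow_pos_of_pos hT _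
  have hcpos : 0 < κ * (T - t) ^ ((1:ℝ) / (2 - p)) := mul_pos hκ hKpos
  have hcm : 0 < κ * (T - t) ^ ((1:ℝ) / (2 - p)) * m := mul_pos hcpos hm
  -- time derivative
  have hd1 : HasDerivAt (fun s : ℝ => T - s) (-1) t := by
    simpa using (hasDerivAt_id t).const_sub T
  have hd2 : HasDerivAt (fun u : ℝ => u ^ ((1:ℝ) / (2 - p)))
      (((1:ℝ) / (2 - p)) * (T - t) ^ ((1:ℝ) / (2 - p) - 1)) (T - t) :=
    Real.hasDerivAt_rpow_const (Or.inl hT.ne')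
  have hd3 : HasDerivAt (fun s : ℝ => (T - s) ^ ((1:ℝ) / (2 - p)))
      ((((1:ℝ) / (2 - p)) * (T - t) ^ ((1:ℝ) / (2 - p) - 1)) * (-1)) t :=
    hd2.comp t hd1
  have hd4 := (hd3.const_mul κ).mul_const (‖x‖ ^ (p / (p - 2)))
  have hderiv : deriv (fun s : ℝ => κ * (T - s) ^ ((1:ℝ) / (2 - p)) * ‖x‖ ^ (p / (p - 2))) t
      = κ * ((((1:ℝ) / (2 - p)) * (T - t) ^ ((1:ℝ) / (2 - p) - 1)) * (-1))
        * ‖x‖ ^ (p / (p - 2)) := hd4.deriv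
  -- |c α|
  have habs : |κ * (T - t) ^ ((1:ℝ) / (2 - p)) * (p / (p - 2))|
      = κ * (T - t) ^ ((1:ℝ) / (2 - p)) * m := by
    rw [abs_of_neg (mul_neg_of_pos_of_neg hcpos hαneg), hαm]
    ring
  have h5 : |κ * (T - t) ^ ((1:ℝ) / (2 - p)) * (p / (p - 2))| ^ (p - 2)
        * (κ * (T - t) ^ ((1:ℝ) / (2 - p)) * (p / (p - 2)))
      = -((κ * (T - t) ^ ((1:ℝ) / (2 - p)) * m) ^ (p - 1)) := by
    rw [habs, hαm, show p - 1 = (p - 2) + 1 from by ring, Real.rpow_add_one hcm.ne']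
    ring
  have h6 : (κ * (T - t) ^ ((1:ℝ) / (2 - p)) * m) ^ (p - 1)
      = κ ^ (p - 1) * (T - t) ^ ((1:ℝ) / (2 - p) - 1) * m ^ (p - 1) := by
    rw [Real.mul_rpow hcpos.le hm.le, Real.mul_rpow hκ.le hKpos.le,
      ← Real.rpow_mul hT.le,
      show (1:ℝ) / (2 - p) * (p - 1) = (1:ℝ) / (2 - p) - 1 from by field_simp; ring]
  rw [hderiv,
    myDivergence_eq p (κ * (T - t) ^ ((1:ℝ) / (2 - p))) (p / (p - 2)) hexp x hx,
    h5, h6, hαm]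
  linear_combination (-((T - t) ^ ((1:ℝ) / (2 - p) - 1) * ‖x‖ ^ (-m))) * hkey
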